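/- Let F be a field and let P ∈ F[x_1,…,x_n] be a polynomial such that deg(P) < |F| and dim(L_P) + dim(rad(P)) = n. If φ, ψ : F^n → F^n are two maps such that P(x + λy) = P(φ(x) + λψ(y)) for all x, y ∈ F^n and λ ∈ F, then there exists a unique bijective linear map ψ_rad on F^n/rad(P) such that ψ_rad ∘ π_rad = π_rad ∘ ψ, where π_rad : F^n → F^n/rad(P) is the canonical projection. -/
import Mathlib

open scoped Classical

noncomputable section

/-- The radical of a function `f : V → F`, as a linear subspace of `V`. -/
def funRadical {F V : Type*} [Field F] [AddCommGroup V] [Module F V]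
    (f : V → F) : Submodule F V where
  carrier := {w | ∀ (v : V) (lam : F), f (v + lam • w) = f v}
  zero_mem' := by intro v lam; simp
  add_mem' := by
    intro a b ha hb v lam
    have h1 : v + lam • (a + b) = (v + lam • a) + lam • b := by
      rw [smul_add]; abel
    rw [h1, hb (v + lam • a) lam, ha v lam]
  smul_mem' := by
    intro c a ha v lam
    have h1 : v + lam • (c • a) = v + (lam * c) • a := by rw [smul_smul]
    rw [h1, ha v (lam * c)]

/-- The directional derivative of a multivariate polynomial `P` along `v` at `a`:
the coefficient of `t` in the univariate polynomial `P (a + t • v)`. -/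
def dirDeriv {F : Type*} [Field F] {n : ℕ}
    (P : MvPolynomial (Fin n) F) (a v : Fin n → F) : F :=
  ((MvPolynomial.aeval
    (fun i => Polynomial.C (a i) + Polynomial.C (v i) * Polynomial.X)) P).coeff 1

/-- The space `L_P`: the span of the functionals `v ↦ ∂P/∂v(a)` over all `a ∈ F^n`. -/
def polyLP {F : Type*} [Field F] {n : ℕ} (P : MvPolynomial (Fin n) F) :
    Submodule F ((Fin n → F) → F) :=
  Submodule.span F (Set.range fun a : Fin n → F => fun v => dirDeriv P a v)

namespace Stmt9Aux

open Polynomial MvPolynomial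

variable {F : Type*} [Field F] {n : ℕ}

lemma eval_dirPoly (P : MvPolynomial (Fin n) F) (a v : Fin n → F) (lam : F) :
    Polynomial.eval lam ((MvPolynomial.aeval
      (fun i => Polynomial.C (a i) + Polynomial.C (v i) * Polynomial.X)) P)
      = MvPolynomial.eval (a + lam • v) P := by
  have h1 : (Polynomial.aeval lam : F[X] →ₐ[F] F).comp
      (MvPolynomial.aeval (fun i => Polynomial.C (a i) + Polynomial.C (v i) * Polynomial.X))
      = MvPolynomial.aeval (fun i => a i + lam * v i) := by
    rw [MvPolynomial.comp_aeval]
    congr 1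
    funext i
    simp only [map_add, map_mul, Polynomial.aeval_C, Polynomial.aeval_X,
      Algebra.algebraMap_self_apply]
    ring
  have h2 := congrArg (fun (g : MvPolynomial (Fin n) F →ₐ[F] F) => g P) h1
  simp only [AlgHom.comp_apply] at h2
  rw [← Polynomial.coe_aeval_eq_eval]
  rw [h2]
  rw [MvPolynomial.aeval_def]
  rw [show (algebraMap F F) = RingHom.id F from rfl, MvPolynomial.eval₂_id]
  congr 1

lemma natDegree_dirPoly_le (P : MvPolynomial (Fin n) F) (a v : Fin n → F) :
    ((MvPolynomial.aeval
      (fun i => Polynomial.C (a i) + Polynomial.C (v i) * Polynomial.X)) P).natDegree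
      ≤ P.totalDegree := by
  rw [MvPolynomial.aeval_def, MvPolynomial.eval₂_eq]
  apply Polynomial.natDegree_sum_le_of_forall_le
  intro d hd
  refine le_trans (Polynomial.natDegree_mul_le) ?_
  have h1 : (algebraMap F F[X] (P.coeff d)).natDegree = 0 := by
    simp [Polynomial.algebraMap_apply]
  rw [h1, zero_add]
  refine le_trans (Polynomial.natDegree_prod_le _ _) ?_
  refine le_trans ?_ (MvPolynomial.le_totalDegree hd)
  rw [Finsupp.sum]
  apply Finset.sum_le_sum
  intro i _
  refine le_trans (Polynomial.natDegree_pow_le) ?_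
  have hb : (Polynomial.C (a i) + Polynomial.C (v i) * Polynomial.X).natDegree ≤ 1 := by
    refine le_trans (Polynomial.natDegree_add_le _ _) ?_
    simp
    refine le_trans (Polynomial.natDegree_mul_le) ?_
    simp
  calc d i * (Polynomial.C (a i) + Polynomial.C (v i) * Polynomial.X).natDegree
      ≤ d i * 1 := Nat.mul_le_mul_left _ hb
    _ = d i := mul_one _

lemma poly_eq_of_eval_eq {d : ℕ} (hd : (d : Cardinal) < Cardinal.mk F)
    (q r : F[X]) (hq : q.natDegree ≤ d) (hr : r.natDegree ≤ d)
    (hev : ∀ x : F, q.eval x = r.eval x) : q = r := by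
  by_contra hne
  have hsub : q - r ≠ 0 := sub_ne_zero.mpr hne
  have hroots : ∀ x : F, (q - r).IsRoot x := by
    intro x
    rw [Polynomial.IsRoot, Polynomial.eval_sub, hev x, sub_self]
  have hfin : Set.Finite (Set.univ : Set F) := by
    have hfr := Polynomial.finite_setOf_isRoot hsub
    have huniv : (Set.univ : Set F) = {x | (q - r).IsRoot x} := by
      ext x
      simp only [Set.mem_univ, Set.mem_setOf_eq, true_iff]
      exact hroots x
    rw [huniv]; exact hfr
  have : Finite F := Set.finite_univ_iff.mp hfin
  have : Fintype F := Fintype.ofFinite F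
  have hcard : (d : Cardinal) < (Fintype.card F : Cardinal) := by
    rwa [Cardinal.mk_fintype] at hd
  have hdn : d < Fintype.card F := by exact_mod_cast hcard
  have hsubset : (Finset.univ : Finset F) ⊆ (q - r).roots.toFinset := by
    intro x _
    rw [Multiset.mem_toFinset, Polynomial.mem_roots hsub]
    exact hroots x
  have h1 : Fintype.card F ≤ (q - r).roots.toFinset.card := by
    simpa [Finset.card_univ] using Finset.card_le_card hsubset
  have h2 : (q - r).roots.toFinset.card ≤ Multiset.card (q - r).roots :=
    Multiset.toFinset_card_le _
  have h3 : Multiset.card (q - r).roots ≤ (q - r).natDegree := Polynomial.card_roots' _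
  have h4 : (q - r).natDegree ≤ d := by
    refine le_trans (Polynomial.natDegree_sub_le q r) ?_
    exact max_le hq hr
  omega

lemma dirDeriv_eq_sum (P : MvPolynomial (Fin n) F) (a v : Fin n → F) :
    dirDeriv P a v = ∑ i, v i * MvPolynomial.eval a (MvPolynomial.pderiv i P) := by
  induction P using MvPolynomial.induction_on with
  | C c => simp [dirDeriv, Polynomial.coeff_C]
  | add p q hp hq =>
      simp only [dirDeriv] at hp hq
      simp only [dirDeriv, map_add, Polynomial.coeff_add, hp, hq, mul_add,
        Finset.sum_add_distrib]
  | mul_X p j hp =>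
      have hmul : (MvPolynomial.aeval
            (fun i => Polynomial.C (a i) + Polynomial.C (v i) * Polynomial.X))
            (p * MvPolynomial.X j)
          = (MvPolynomial.aeval
              (fun i => Polynomial.C (a i) + Polynomial.C (v i) * Polynomial.X)) p
            * (Polynomial.C (a j) + Polynomial.C (v j) * Polynomial.X) := by
        simp
      set A := (MvPolynomial.aeval
        (fun i => Polynomial.C (a i) + Polynomial.C (v i) * Polynomial.X)) p with hA
      have hcoeff0 : A.coeff 0 = MvPolynomial.eval a p := by
        rw [Polynomial.coeff_zero_eq_eval_zero]
        simpa using eval_dirPoly p a v 0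
      have h01 : ((A * Polynomial.C (v j)) * Polynomial.X).coeff 1
          = (A * Polynomial.C (v j)).coeff 0 := by
        simpa using Polynomial.coeff_mul_X (A * Polynomial.C (v j)) 0
      have hlhs : dirDeriv (p * MvPolynomial.X j) a v
          = dirDeriv p a v * a j + MvPolynomial.eval a p * v j := by
        rw [dirDeriv, hmul]
        have hring : A * (Polynomial.C (a j) + Polynomial.C (v j) * Polynomial.X)
            = A * Polynomial.C (a j) + (A * Polynomial.C (v j)) * Polynomial.X := by ring
        rw [hring, Polynomial.coeff_add, Polynomial.coeff_mul_C, h01,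
          Polynomial.coeff_mul_C, hcoeff0]
        rfl
      have hterm : ∀ i, v i * MvPolynomial.eval a (MvPolynomial.pderiv i (p * MvPolynomial.X j))
          = v i * MvPolynomial.eval a (MvPolynomial.pderiv i p) * a j
            + (if j = i then v i * MvPolynomial.eval a p else 0) := by
        intro i
        rw [MvPolynomial.pderiv_mul, MvPolynomial.pderiv_X]
        by_cases hij : j = i
        · subst hij; simp [Pi.single_apply]; ring
        · simp [Pi.single_apply, Ne.symm hij, hij]; ring
      have hrhs : ∑ i, v i * MvPolynomial.eval a (MvPolynomial.pderiv i (p * MvPolynomial.X j))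
          = (∑ i, v i * MvPolynomial.eval a (MvPolynomial.pderiv i p)) * a j
            + v j * MvPolynomial.eval a p := by
        rw [Finset.sum_congr rfl (fun i _ => hterm i), Finset.sum_add_distrib,
          Finset.sum_ite_eq, Finset.sum_mul]
        simp [mul_comm, mul_assoc, mul_left_comm]
      rw [hlhs, hrhs, hp]
      ring

end Stmt9Aux

theorem stmt_9 {F : Type*} [Field F] {n : ℕ}
    (P : MvPolynomial (Fin n) F)
    (hdeg : (P.totalDegree : Cardinal) < Cardinal.mk F)
    (hdim : Module.rank F ↥(polyLP P)
      + Module.rank F ↥(funRadical (fun x : Fin n → F => MvPolynomial.eval x P))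
      = (n : Cardinal))
    (phi psi : (Fin n → F) → (Fin n → F))
    (h : ∀ (x y : Fin n → F) (lam : F),
      MvPolynomial.eval (x + lam • y) P = MvPolynomial.eval (phi x + lam • psi y) P) :
    ∃! T : ((Fin n → F) ⧸ funRadical (fun x : Fin n → F => MvPolynomial.eval x P)) →ₗ[F]
        ((Fin n → F) ⧸ funRadical (fun x : Fin n → F => MvPolynomial.eval x P)),
      Function.Bijective T ∧
        ∀ v : Fin n → F,
          T (Submodule.Quotient.mk v) = Submodule.Quotient.mk (psi v) := by
  classical
  set rad := funRadical (fun x : Fin n → F => MvPolynomial.eval x P) with hraddef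
  -- Step 1: directional derivative identity
  have hdir : ∀ x y, dirDeriv P x y = dirDeriv P (phi x) (psi y) := by
    intro x y
    have heq := Stmt9Aux.poly_eq_of_eval_eq hdeg _ _
      (Stmt9Aux.natDegree_dirPoly_le P x y) (Stmt9Aux.natDegree_dirPoly_le P (phi x) (psi y))
      (fun lam => by rw [Stmt9Aux.eval_dirPoly, Stmt9Aux.eval_dirPoly]; exact h x y lam)
    rw [dirDeriv, dirDeriv, heq]
  -- Step 2: rad elements kill all directional derivatives
  have hradK0 : ∀ w ∈ rad, ∀ a, dirDeriv P a w = 0 := by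
    intro w hw a
    have hdc : ((MvPolynomial.aeval
        (fun i => Polynomial.C (a i) + Polynomial.C (w i) * Polynomial.X)) P)
        = Polynomial.C (MvPolynomial.eval a P) := by
      apply Stmt9Aux.poly_eq_of_eval_eq hdeg _ _ (Stmt9Aux.natDegree_dirPoly_le P a w)
        (by simp)
      intro lam
      rw [Stmt9Aux.eval_dirPoly, Polynomial.eval_C]
      exact hw a lam
    rw [dirDeriv, hdc, Polynomial.coeff_C]
    simp
  -- Step 3: dual side
  let L : (Fin n → F) → Module.Dual F (Fin n → F) := fun a =>
    ∑ i, MvPolynomial.eval a (MvPolynomial.pderiv i P) • LinearMap.proj i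
  have hLapp : ∀ a v, L a v = dirDeriv P a v := by
    intro a v
    rw [Stmt9Aux.dirDeriv_eq_sum]
    simp [L, LinearMap.sum_apply, LinearMap.smul_apply, LinearMap.proj_apply, mul_comm]
  let e : Module.Dual F (Fin n → F) →ₗ[F] ((Fin n → F) → F) :=
    { toFun := fun f => ⇑f, map_add' := fun f g => rfl, map_smul' := fun c f => rfl }
  have he : Function.Injective e := fun f g hfg => DFunLike.coe_injective hfg
  let LD : Submodule F (Module.Dual F (Fin n → F)) := Submodule.span F (Set.range L)
  have hmap : Submodule.map e LD = polyLP P := by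
    rw [Submodule.map_span, ← Set.range_comp]
    have hr : (⇑e ∘ L) = fun a => fun v => dirDeriv P a v := by
      funext a v; exact hLapp a v
    rw [hr]; rfl
  have hLPfin : FiniteDimensional F (polyLP P) := by
    rw [← hmap]; infer_instance
  have hfr_eq : Module.finrank F (polyLP P) = Module.finrank F LD := by
    rw [← hmap]
    exact (LinearEquiv.finrank_eq (Submodule.equivMapOfInjective e he LD)).symm
  have hKmem : ∀ w, w ∈ LD.dualCoannihilator ↔ ∀ a, dirDeriv P a w = 0 := by
    intro w
    rw [Submodule.mem_dualCoannihilator]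
    constructor
    · intro hw a
      rw [← hLapp]
      exact hw (L a) (Submodule.subset_span (Set.mem_range_self a))
    · intro hw φ hφ
      induction hφ using Submodule.span_induction with
      | mem φ hφ =>
          obtain ⟨a, rfl⟩ := hφ
          rw [hLapp]; exact hw a
      | zero => simp
      | add f g _ _ hf hg => simp [hf, hg]
      | smul c f _ hf => simp [hf]
  -- Step 4: dimension count gives rad = dualCoannihilator LD
  have hfrV : Module.finrank F (Fin n → F) = n := Module.finrank_fin_fun F
  have hco := Subspace.finrank_add_finrank_dualCoannihilator_eq LD
  rw [hfrV] at hco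
  have hdim' : Module.finrank F (polyLP P) + Module.finrank F rad = n := by
    rw [← Module.finrank_eq_rank, ← Module.finrank_eq_rank] at hdim
    exact_mod_cast hdim
  have hKrad : rad = LD.dualCoannihilator := by
    apply Submodule.eq_of_le_of_finrank_eq
    · intro w hw; exact (hKmem w).mpr (hradK0 w hw)
    · omega
  have hrad_iff : ∀ w, w ∈ rad ↔ ∀ a, dirDeriv P a w = 0 := by
    intro w
    rw [hKrad]; exact hKmem w
  have hrad_all : ∀ w ∈ rad, ∀ l ∈ polyLP P, l w = 0 := by
    intro w hw l hl
    rw [← hmap] at hl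
    obtain ⟨φ, hφ, rfl⟩ := hl
    have hw' : w ∈ LD.dualCoannihilator := by rw [← hKrad]; exact hw
    exact (Submodule.mem_dualCoannihilator w).mp hw' φ hφ
  have hlin : ∀ l ∈ polyLP P,
      (∀ u w, l (u + w) = l u + l w) ∧ (∀ (c : F) u, l (c • u) = c * l u) := by
    intro l hl
    rw [← hmap] at hl
    obtain ⟨φ, hφ, rfl⟩ := hl
    exact ⟨fun u w => φ.map_add u w, fun c u => φ.map_smul c u⟩
  -- Step 5: the composition operator and the phi-span
  let A : ((Fin n → F) → F) →ₗ[F] ((Fin n → F) → F) :=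
    { toFun := fun l => l ∘ psi, map_add' := fun f g => rfl, map_smul' := fun c f => rfl }
  let Lphi : Submodule F ((Fin n → F) → F) :=
    Submodule.span F (Set.range fun x => fun v => dirDeriv P (phi x) v)
  have hLphi_le : Lphi ≤ polyLP P := by
    apply Submodule.span_le.mpr
    rintro _ ⟨x, rfl⟩
    exact Submodule.subset_span (Set.mem_range_self (phi x))
  have hmapA : Submodule.map A Lphi = polyLP P := by
    rw [Submodule.map_span, ← Set.range_comp]
    have hr : (⇑A ∘ fun x => fun v => dirDeriv P (phi x) v)
        = fun x => fun v => dirDeriv P x v := by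
      funext x v
      exact (hdir x v).symm
    rw [hr]; rfl
  have hLphifin : FiniteDimensional F Lphi := Submodule.finiteDimensional_of_le hLphi_le
  have hLphi_eq : Lphi = polyLP P := by
    apply Submodule.eq_of_le_of_finrank_eq hLphi_le
    have h1 : Module.finrank F (polyLP P) ≤ Module.finrank F Lphi := by
      calc Module.finrank F (polyLP P)
          = Module.finrank F (Submodule.map A Lphi) := by rw [hmapA]
        _ ≤ Module.finrank F Lphi := Submodule.finrank_map_le A Lphi
    have h2 : Module.finrank F Lphi ≤ Module.finrank F (polyLP P) :=
      Submodule.finrank_mono hLphi_le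
    omega
  have hA_mem : ∀ l ∈ polyLP P, A l ∈ polyLP P := by
    intro l hl
    rw [← hmapA]
    exact Submodule.mem_map_of_mem (by rw [hLphi_eq]; exact hl)
  -- Step 6: psi is linear modulo rad
  have hpsi_add : ∀ y z, psi (y + z) - (psi y + psi z) ∈ rad := by
    intro y z
    rw [hrad_iff]
    intro a
    have hla : (fun v => dirDeriv P a v) ∈ polyLP P :=
      Submodule.subset_span (Set.mem_range_self a)
    obtain ⟨ladd, lsmul⟩ := hlin _ hla
    obtain ⟨Aadd, _⟩ := hlin _ (hA_mem _ hla)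
    have e1 : dirDeriv P a (psi (y + z)) = dirDeriv P a (psi y) + dirDeriv P a (psi z) :=
      Aadd y z
    have hsubeq : psi (y + z) - (psi y + psi z) = psi (y + z) + (-1 : F) • (psi y + psi z) := by
      rw [neg_one_smul, sub_eq_add_neg]
    rw [hsubeq]
    have := ladd (psi (y + z)) ((-1 : F) • (psi y + psi z))
    rw [this, lsmul, ladd, e1]
    ring
  have hpsi_smul : ∀ (c : F) y, psi (c • y) - c • psi y ∈ rad := by
    intro c y
    rw [hrad_iff]
    intro a
    have hla : (fun v => dirDeriv P a v) ∈ polyLP P :=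
      Submodule.subset_span (Set.mem_range_self a)
    obtain ⟨ladd, lsmul⟩ := hlin _ hla
    obtain ⟨_, Asmul⟩ := hlin _ (hA_mem _ hla)
    have e1 : dirDeriv P a (psi (c • y)) = c * dirDeriv P a (psi y) := Asmul c y
    have hsubeq : psi (c • y) - c • psi y = psi (c • y) + (-1 : F) • (c • psi y) := by
      rw [neg_one_smul, sub_eq_add_neg]
    rw [hsubeq]
    have := ladd (psi (c • y)) ((-1 : F) • (c • psi y))
    rw [this, lsmul, lsmul, e1]
    ring
  have hpsi_rad : ∀ y ∈ rad, psi y ∈ rad := by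
    intro y hy
    rw [hrad_iff]
    intro a
    have hla : (fun v => dirDeriv P a v) ∈ polyLP P :=
      Submodule.subset_span (Set.mem_range_self a)
    exact hrad_all y hy _ (hA_mem _ hla)
  have hpsi_inj : ∀ y, psi y ∈ rad → y ∈ rad := by
    intro y hy
    rw [hrad_iff]
    intro a
    have hla : (fun v => dirDeriv P a v) ∈ polyLP P :=
      Submodule.subset_span (Set.mem_range_self a)
    rw [← hmapA] at hla
    obtain ⟨l', hl', hl'e⟩ := hla
    have hz : l' (psi y) = 0 := hrad_all _ hy l' (hLphi_le hl')
    have : dirDeriv P a y = (A l') y := (congrFun hl'e y).symm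
    rw [this]
    exact hz
  -- Step 7: build the map
  let psi' : (Fin n → F) →ₗ[F] ((Fin n → F) ⧸ rad) :=
    { toFun := fun y => Submodule.Quotient.mk (psi y)
      map_add' := fun y z => by
        rw [← Submodule.Quotient.mk_add]
        exact (Submodule.Quotient.eq rad).mpr (hpsi_add y z)
      map_smul' := fun c y => by
        simp only [RingHom.id_apply]
        rw [← Submodule.Quotient.mk_smul]
        exact (Submodule.Quotient.eq rad).mpr (hpsi_smul c y) }
  have hker : rad ≤ LinearMap.ker psi' := by
    intro y hy
    rw [LinearMap.mem_ker]
    exact (Submodule.Quotient.mk_eq_zero rad).mpr (hpsi_rad y hy)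
  refine ⟨rad.liftQ psi' hker, ⟨?_, ?_⟩, ?_⟩
  · have hinj : Function.Injective (rad.liftQ psi' hker) := by
      rw [← LinearMap.ker_eq_bot]
      rw [Submodule.eq_bot_iff]
      intro u hu
      obtain ⟨y, rfl⟩ := Submodule.Quotient.mk_surjective rad u
      rw [LinearMap.mem_ker, Submodule.liftQ_apply] at hu
      have hmem : psi y ∈ rad := (Submodule.Quotient.mk_eq_zero rad).mp hu
      exact (Submodule.Quotient.mk_eq_zero rad).mpr (hpsi_inj y hmem)
    exact ⟨hinj, LinearMap.injective_iff_surjective.mp hinj⟩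
  · intro v
    exact Submodule.liftQ_apply rad psi' v
  · rintro T' ⟨_, hT'⟩
    apply LinearMap.ext
    intro u
    obtain ⟨y, rfl⟩ := Submodule.Quotient.mk_surjective rad u
    rw [hT' y, Submodule.liftQ_apply]
    rfl

end
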